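/- arXiv:2311.00944 — 2 statements merged into one kernel-verified Lean document; each statement's English description precedes it below -/
import Mathlib

section
/- Let p > l, γ₂ := (l+p)/(p−l), and η > 0. For y ∈ Y and z ∈ ℝ^{d1}, set y⁺(z) := P_Y(y + η∇_y f(x*(y,z), y)). Then ‖x*(z) − x*(y⁺(z),z)‖² ≤ (2(1 + ηl + ηlγ₂)/(η(p−l)))·‖y − y⁺(z)‖·D(Y). -/
open Set Metric
open scoped RealInnerProductSpace

noncomputable def gradx {d1 d2 : ℕ}
    (f : EuclideanSpace ℝ (Fin d1) → EuclideanSpace ℝ (Fin d2) → ℝ)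
    (x : EuclideanSpace ℝ (Fin d1)) (y : EuclideanSpace ℝ (Fin d2)) :
    EuclideanSpace ℝ (Fin d1) :=
  gradient (fun x' => f x' y) x

noncomputable def grady {d1 d2 : ℕ}
    (f : EuclideanSpace ℝ (Fin d1) → EuclideanSpace ℝ (Fin d2) → ℝ)
    (x : EuclideanSpace ℝ (Fin d1)) (y : EuclideanSpace ℝ (Fin d2)) :
    EuclideanSpace ℝ (Fin d2) :=
  gradient (fun y' => f x y') y

/-- `f` is differentiable and `l`-smooth: the gradient is `l`-Lipschitz with respect to the
Euclidean norm on the product space (stated in squared form). -/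
def IsLSmooth {d1 d2 : ℕ} (l : ℝ)
    (f : EuclideanSpace ℝ (Fin d1) → EuclideanSpace ℝ (Fin d2) → ℝ) : Prop :=
  Differentiable ℝ (fun w : EuclideanSpace ℝ (Fin d1) × EuclideanSpace ℝ (Fin d2) => f w.1 w.2) ∧
  ∀ x₁ x₂ y₁ y₂,
    ‖gradx f x₁ y₁ - gradx f x₂ y₂‖ ^ 2 + ‖grady f x₁ y₁ - grady f x₂ y₂‖ ^ 2
      ≤ l ^ 2 * (‖x₁ - x₂‖ ^ 2 + ‖y₁ - y₂‖ ^ 2)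

/-- `f̂(x, y, z) = f(x, y) + (p/2)‖x − z‖²`. -/
noncomputable def fhat {d1 d2 : ℕ}
    (f : EuclideanSpace ℝ (Fin d1) → EuclideanSpace ℝ (Fin d2) → ℝ) (p : ℝ)
    (x : EuclideanSpace ℝ (Fin d1)) (y : EuclideanSpace ℝ (Fin d2))
    (z : EuclideanSpace ℝ (Fin d1)) : ℝ :=
  f x y + p / 2 * ‖x - z‖ ^ 2


section aux
variable {d1 d2 : ℕ} {f : EuclideanSpace ℝ (Fin d1) → EuclideanSpace ℝ (Fin d2) → ℝ}

lemma sq_le_imp {a c : ℝ} (ha : 0 ≤ a) (hc : 0 ≤ c) (h : a ^ 2 ≤ c ^ 2) : a ≤ c := by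
  nlinarith

lemma aux_le_of_Ioo {a c : ℝ} (h : ∀ t ∈ Set.Ioo (0:ℝ) 1, (1 - t) * c ≤ a) : c ≤ a := by
  have htend : Filter.Tendsto (fun t : ℝ => (1 - t) * c) (nhdsWithin 0 (Set.Ioi 0))
      (nhds ((1 - 0) * c)) :=
    (Continuous.tendsto (by continuity) 0).mono_left nhdsWithin_le_nhds
  have hc : (1 - (0:ℝ)) * c = c := by ring
  rw [hc] at htend
  refine le_of_tendsto htend ?_
  filter_upwards [Ioo_mem_nhdsGT_of_mem (by norm_num : (0:ℝ) ∈ Set.Ico (0:ℝ) 1)] with t ht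
  exact h t ht

lemma aux_le_zero {c b : ℝ} (h : ∀ t ∈ Set.Ioo (0:ℝ) 1, c ≤ t * b) : c ≤ 0 := by
  have htend : Filter.Tendsto (fun t : ℝ => t * b) (nhdsWithin 0 (Set.Ioi 0))
      (nhds ((0:ℝ) * b)) :=
    (Continuous.tendsto (by continuity) 0).mono_left nhdsWithin_le_nhds
  have hb : (0:ℝ) * b = 0 := by ring
  rw [hb] at htend
  refine ge_of_tendsto htend ?_
  filter_upwards [Ioo_mem_nhdsGT_of_mem (by norm_num : (0:ℝ) ∈ Set.Ico (0:ℝ) 1)] with t ht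
  exact h t ht

lemma diffx (hfd : Differentiable ℝ
      (fun w : EuclideanSpace ℝ (Fin d1) × EuclideanSpace ℝ (Fin d2) => f w.1 w.2))
    (y : EuclideanSpace ℝ (Fin d2)) : Differentiable ℝ (fun x' => f x' y) :=
  fun x => by exact (hfd (x, y)).comp x ((differentiableAt_id (𝕜 := ℝ)).prodMk (differentiableAt_const y))

lemma hasDerivAt_fline
    (hfd : Differentiable ℝ
      (fun w : EuclideanSpace ℝ (Fin d1) × EuclideanSpace ℝ (Fin d2) => f w.1 w.2))
    (y : EuclideanSpace ℝ (Fin d2)) (x d : EuclideanSpace ℝ (Fin d1)) (t : ℝ) :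
    HasDerivAt (fun t : ℝ => f (x + t • d) y) ⟪gradx f (x + t • d) y, d⟫ t := by
  have hline : HasDerivAt (fun t : ℝ => x + t • d) d t := by
    simpa using ((hasDerivAt_id t).smul_const d).const_add x
  have hg : HasGradientAt (fun x' => f x' y) (gradx f (x + t • d) y) (x + t • d) :=
    (diffx hfd y (x + t • d)).hasGradientAt
  have h := hg.hasFDerivAt.comp_hasDerivAt t hline
  exact h

lemma hasDerivAt_quad (p : ℝ) (x d z : EuclideanSpace ℝ (Fin d1)) (t : ℝ) :
    HasDerivAt (fun t : ℝ => p / 2 * ‖x + t • d - z‖ ^ 2)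
      (p * (⟪x - z, d⟫ + t * ‖d‖ ^ 2)) t := by
  have hrw : ∀ s : ℝ, p / 2 * ‖x + s • d - z‖ ^ 2
      = p / 2 * ‖x - z‖ ^ 2 + (p * ⟪x - z, d⟫) * s + (p / 2 * ‖d‖ ^ 2) * s ^ 2 := by
    intro s
    have h1 : x + s • d - z = (x - z) + s • d := by abel
    rw [h1, norm_add_sq_real, real_inner_smul_right, norm_smul, mul_pow, Real.norm_eq_abs,
      sq_abs]
    ring
  have h2 : HasDerivAt (fun s : ℝ => s ^ 2) (2 * t) t := by
    simpa using hasDerivAt_pow 2 t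
  have h3 : HasDerivAt
      (fun s : ℝ => p / 2 * ‖x - z‖ ^ 2 + (p * ⟪x - z, d⟫) * s + (p / 2 * ‖d‖ ^ 2) * s ^ 2)
      (0 + (p * ⟪x - z, d⟫) * 1 + (p / 2 * ‖d‖ ^ 2) * (2 * t)) t := by
    exact ((hasDerivAt_const t _).add (((hasDerivAt_id t)).const_mul _)).add (h2.const_mul _)
  have h4 : (0 + (p * ⟪x - z, d⟫) * 1 + (p / 2 * ‖d‖ ^ 2) * (2 * t))
      = p * (⟪x - z, d⟫ + t * ‖d‖ ^ 2) := by ring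
  rw [h4] at h3
  refine HasDerivAt.congr_of_eventuallyEq h3 ?_
  filter_upwards with s using hrw s

lemma uc {l p : ℝ} (hl : 0 < l) (hpl : l < p)
    (hfd : Differentiable ℝ
      (fun w : EuclideanSpace ℝ (Fin d1) × EuclideanSpace ℝ (Fin d2) => f w.1 w.2))
    (hlip : ∀ x₁ x₂ y, ‖gradx f x₁ y - gradx f x₂ y‖ ≤ l * ‖x₁ - x₂‖)
    (y : EuclideanSpace ℝ (Fin d2)) (z x x' : EuclideanSpace ℝ (Fin d1))
    {t : ℝ} (ht : t ∈ Set.Icc (0:ℝ) 1) :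
    fhat f p (x + t • (x' - x)) y z
      ≤ (1 - t) * fhat f p x y z + t * fhat f p x' y z
        - t * (1 - t) * ((p - l) / 2 * ‖x' - x‖ ^ 2) := by
  set d := x' - x with hd
  set ψ : ℝ → ℝ := fun s => f (x + s • d) y + p / 2 * ‖x + s • d - z‖ ^ 2
      - (p - l) / 2 * ‖d‖ ^ 2 * s ^ 2 with hψ
  have hψd : ∀ s : ℝ, HasDerivAt ψ
      (⟪gradx f (x + s • d) y, d⟫ + p * (⟪x - z, d⟫ + s * ‖d‖ ^ 2)
        - (p - l) * ‖d‖ ^ 2 * s) s := by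
    intro s
    have h1 := (hasDerivAt_fline hfd y x d s).add (hasDerivAt_quad p x d z s)
    have h2 : HasDerivAt (fun s : ℝ => (p - l) / 2 * ‖d‖ ^ 2 * s ^ 2)
        ((p - l) * ‖d‖ ^ 2 * s) s := by
      have := (hasDerivAt_pow 2 s).const_mul ((p - l) / 2 * ‖d‖ ^ 2)
      exact this.congr_deriv (by push_cast; ring)
    exact h1.sub h2
  have hdiff : Differentiable ℝ ψ := fun s => (hψd s).differentiableAt
  have hmono : Monotone (deriv ψ) := by
    intro s u hsu
    rw [(hψd s).deriv, (hψd u).deriv]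
    have hg := hlip (x + s • d) (x + u • d) y
    have hnorm : ‖(x + s • d) - (x + u • d)‖ = (u - s) * ‖d‖ := by
      have h5 : (x + s • d) - (x + u • d) = (s - u) • d := by
        rw [sub_smul]; abel
      rw [h5, norm_smul, Real.norm_eq_abs, abs_of_nonpos (by linarith), neg_sub]
    rw [hnorm] at hg
    have hcs : ⟪gradx f (x + s • d) y - gradx f (x + u • d) y, d⟫
        ≤ ‖gradx f (x + s • d) y - gradx f (x + u • d) y‖ * ‖d‖ := real_inner_le_norm _ _
    have hsub : ⟪gradx f (x + s • d) y - gradx f (x + u • d) y, d⟫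
        = ⟪gradx f (x + s • d) y, d⟫ - ⟪gradx f (x + u • d) y, d⟫ := inner_sub_left _ _ _
    nlinarith [norm_nonneg d, norm_nonneg (gradx f (x + s • d) y - gradx f (x + u • d) y)]
  have hconv := hmono.convexOn_univ_of_deriv hdiff
  have h6 := hconv.2 (Set.mem_univ (0:ℝ)) (Set.mem_univ (1:ℝ))
      (by linarith [ht.2] : (0:ℝ) ≤ 1 - t) (ht.1) (by ring)
  simp only [smul_eq_mul, mul_zero, mul_one, zero_add] at h6
  have e0 : ψ 0 = fhat f p x y z := by
    simp [hψ, fhat]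
  have e1 : ψ 1 = fhat f p x' y z - (p - l) / 2 * ‖d‖ ^ 2 := by
    simp [hψ, fhat, hd]
  have et : ψ t = fhat f p (x + t • d) y z - (p - l) / 2 * ‖d‖ ^ 2 * t ^ 2 := by
    simp [hψ, fhat]
  rw [e0, e1, et] at h6
  nlinarith [h6]

lemma growth {l p : ℝ} (hl : 0 < l) (hpl : l < p)
    (hfd : Differentiable ℝ
      (fun w : EuclideanSpace ℝ (Fin d1) × EuclideanSpace ℝ (Fin d2) => f w.1 w.2))
    (hlip : ∀ x₁ x₂ y, ‖gradx f x₁ y - gradx f x₂ y‖ ≤ l * ‖x₁ - x₂‖)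
    (y : EuclideanSpace ℝ (Fin d2)) (z x₀ : EuclideanSpace ℝ (Fin d1))
    (hmin : ∀ x, fhat f p x₀ y z ≤ fhat f p x y z) (x : EuclideanSpace ℝ (Fin d1)) :
    (p - l) / 2 * ‖x - x₀‖ ^ 2 ≤ fhat f p x y z - fhat f p x₀ y z := by
  apply aux_le_of_Ioo
  intro t ht
  have h1 := uc hl hpl hfd hlip y z x₀ x (Set.mem_Icc.mpr ⟨ht.1.le, ht.2.le⟩)
  have h2 := hmin (x₀ + t • (x - x₀))
  have ht1 : 0 < t := ht.1
  nlinarith [h1, h2]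

lemma xstar_lip {l p : ℝ} (hl : 0 < l) (hpl : l < p)
    (hf : IsLSmooth l f)
    (hlip : ∀ x₁ x₂ y, ‖gradx f x₁ y - gradx f x₂ y‖ ≤ l * ‖x₁ - x₂‖)
    (y₁ y₂ : EuclideanSpace ℝ (Fin d2)) (z x₁ x₂ : EuclideanSpace ℝ (Fin d1))
    (hmin₁ : ∀ x, fhat f p x₁ y₁ z ≤ fhat f p x y₁ z)
    (hmin₂ : ∀ x, fhat f p x₂ y₂ z ≤ fhat f p x y₂ z) :
    (p - l) * ‖x₁ - x₂‖ ≤ l * ‖y₁ - y₂‖ := by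
  have hg1 := growth hl hpl hf.1 hlip y₁ z x₁ hmin₁ x₂
  have hg2 := growth hl hpl hf.1 hlip y₂ z x₂ hmin₂ x₁
  -- mean value bound on g := fun x => f x y₁ - f x y₂
  have hmv : ‖(f x₂ y₁ - f x₂ y₂) - (f x₁ y₁ - f x₁ y₂)‖ ≤ (l * ‖y₁ - y₂‖) * ‖x₂ - x₁‖ := by
    have hder : ∀ x ∈ (Set.univ : Set (EuclideanSpace ℝ (Fin d1))),
        HasFDerivWithinAt (fun x => f x y₁ - f x y₂)
          ((InnerProductSpace.toDual ℝ _ (gradx f x y₁))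
            - (InnerProductSpace.toDual ℝ _ (gradx f x y₂))) Set.univ x := by
      intro x _
      exact (((diffx hf.1 y₁ x).hasGradientAt.hasFDerivAt).sub
        ((diffx hf.1 y₂ x).hasGradientAt.hasFDerivAt)).hasFDerivWithinAt
    have hbound : ∀ x ∈ (Set.univ : Set (EuclideanSpace ℝ (Fin d1))),
        ‖(InnerProductSpace.toDual ℝ _ (gradx f x y₁))
            - (InnerProductSpace.toDual ℝ _ (gradx f x y₂))‖ ≤ l * ‖y₁ - y₂‖ := by
      intro x _
      rw [← map_sub, (InnerProductSpace.toDual ℝ _).norm_map]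
      have := hf.2 x x y₁ y₂
      have hx0 : ‖x - x‖ = 0 := by simp
      apply sq_le_imp (norm_nonneg _) (by positivity)
      rw [hx0] at this
      nlinarith [sq_nonneg ‖grady f x y₁ - grady f x y₂‖, this]
    exact convex_univ.norm_image_sub_le_of_norm_hasFDerivWithin_le hder hbound
      (Set.mem_univ x₁) (Set.mem_univ x₂)
  rw [Real.norm_eq_abs] at hmv
  have habs : (f x₂ y₁ - f x₂ y₂) - (f x₁ y₁ - f x₁ y₂)
      ≤ |(f x₂ y₁ - f x₂ y₂) - (f x₁ y₁ - f x₁ y₂)| := le_abs_self _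
  have hfh : ∀ (a b : EuclideanSpace ℝ (Fin d1)) (w : EuclideanSpace ℝ (Fin d2)),
      fhat f p a w z - fhat f p b w z = f a w - f b w + (p/2*‖a-z‖^2 - p/2*‖b-z‖^2) := by
    intro a b w; simp [fhat]; ring
  have hq1 := hfh x₂ x₁ y₁
  have hq2 := hfh x₁ x₂ y₂
  have hnorm12 : ‖x₂ - x₁‖ = ‖x₁ - x₂‖ := norm_sub_rev _ _
  rw [hnorm12] at hmv hg1
  rcases eq_or_lt_of_le (norm_nonneg (x₁ - x₂)) with h0 | h0
  · rw [← h0, mul_zero]; positivity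
  · nlinarith [hg1, hg2, hmv, habs, h0]

lemma projVI {Y : Set (EuclideanSpace ℝ (Fin d2))} (hYconv : Convex ℝ Y)
    (projY : EuclideanSpace ℝ (Fin d2) → EuclideanSpace ℝ (Fin d2))
    (hprojY_mem : ∀ v, projY v ∈ Y)
    (hprojY : ∀ v, ∀ w ∈ Y, ‖v - projY v‖ ≤ ‖v - w‖)
    (v w : EuclideanSpace ℝ (Fin d2)) (hw : w ∈ Y) :
    ⟪v - projY v, w - projY v⟫ ≤ 0 := by
  have key : 2 * ⟪v - projY v, w - projY v⟫ ≤ 0 := by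
    apply aux_le_zero (b := ‖w - projY v‖ ^ 2)
    intro t ht
    have hu : (1 - t) • projY v + t • w ∈ Y :=
      hYconv (hprojY_mem v) hw (by linarith [ht.2]) ht.1.le (by ring)
    have hle := hprojY v _ hu
    have hrw : v - ((1 - t) • projY v + t • w) = (v - projY v) - t • (w - projY v) := by
      rw [sub_smul, smul_sub, one_smul]; abel
    rw [hrw] at hle
    have hsq : ‖(v - projY v) - t • (w - projY v)‖ ^ 2
        = ‖v - projY v‖ ^ 2 - 2 * (t * ⟪v - projY v, w - projY v⟫)
          + t ^ 2 * ‖w - projY v‖ ^ 2 := by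
      rw [norm_sub_sq_real, real_inner_smul_right, norm_smul, mul_pow, Real.norm_eq_abs, sq_abs]
    have hle2 : ‖v - projY v‖ ^ 2 ≤ ‖(v - projY v) - t • (w - projY v)‖ ^ 2 := by
      have h := hle
      nlinarith [norm_nonneg (v - projY v), norm_nonneg ((v - projY v) - t • (w - projY v))]
    rw [hsq] at hle2
    have ht1 : 0 < t := ht.1
    nlinarith [hle2]
  linarith

end aux

set_option maxHeartbeats 1000000 in
/-- under one-point-concavity in `y` on the compact convex `Y`, with
`γ₂ = (l+p)/(p−l)` and `y⁺(z) = P_Y(y + η∇_y f(x*(y,z), y))`,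
`‖x*(z) − x*(y⁺(z),z)‖² ≤ (2(1 + ηl + ηlγ₂)/(η(p−l)))‖y − y⁺(z)‖·D(Y)`. -/
theorem statement9 {d1 d2 : ℕ} (l p η : ℝ) (hl : 0 < l) (hpl : l < p) (hη : 0 < η)
    (f : EuclideanSpace ℝ (Fin d1) → EuclideanSpace ℝ (Fin d2) → ℝ)
    (hf : IsLSmooth l f)
    -- `Y` nonempty convex compact; `projY` the nearest-point projection onto `Y`
    (Y : Set (EuclideanSpace ℝ (Fin d2))) (hYne : Y.Nonempty) (hYconv : Convex ℝ Y)
    (hYcomp : IsCompact Y)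
    (projY : EuclideanSpace ℝ (Fin d2) → EuclideanSpace ℝ (Fin d2))
    (hprojY_mem : ∀ v, projY v ∈ Y)
    (hprojY : ∀ v, ∀ w ∈ Y, ‖v - projY v‖ ≤ ‖v - w‖)
    -- one-point-concavity of `f` in `y`: `ystar x` maximizes `f(x,·)` over `Y` and
    -- `⟨∇_y f(x,y), y − y*(x)⟩ ≤ f(x,y) − f(x,y*(x))` for all `y ∈ Y`
    (ystar : EuclideanSpace ℝ (Fin d1) → EuclideanSpace ℝ (Fin d2))
    (hystar_mem : ∀ x, ystar x ∈ Y)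
    (hystar : ∀ x, ∀ y ∈ Y, f x y ≤ f x (ystar x))
    (hOPC : ∀ x, ∀ y ∈ Y, ⟪grady f x y, y - ystar x⟫ ≤ f x y - f x (ystar x))
    -- `x*(y, z)`: minimizer of `x ↦ f̂(x, y, z)`
    (xstar : EuclideanSpace ℝ (Fin d2) → EuclideanSpace ℝ (Fin d1) → EuclideanSpace ℝ (Fin d1))
    (hxstar : ∀ y z x, fhat f p (xstar y z) y z ≤ fhat f p x y z)
    -- `x*(z)`: minimizer of `x ↦ Φ(x,z) = max_{y∈Y} f̂(x,y,z)`
    (xstarz : EuclideanSpace ℝ (Fin d1) → EuclideanSpace ℝ (Fin d1))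
    (hxstarz : ∀ z x, sSup ((fun y => fhat f p (xstarz z) y z) '' Y)
        ≤ sSup ((fun y => fhat f p x y z) '' Y))
    (y : EuclideanSpace ℝ (Fin d2)) (hy : y ∈ Y) (z : EuclideanSpace ℝ (Fin d1)) :
    ‖xstarz z - xstar (projY (y + η • grady f (xstar y z) y)) z‖ ^ 2
      ≤ 2 * (1 + η * l + η * l * ((l + p) / (p - l))) / (η * (p - l))
          * ‖y - projY (y + η • grady f (xstar y z) y)‖ * diam Y := by
  have hμ : 0 < p - l := sub_pos.mpr hpl
  have hp0 : 0 < p := lt_trans hl hpl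
  have hlip : ∀ x₁ x₂ y', ‖gradx f x₁ y' - gradx f x₂ y'‖ ≤ l * ‖x₁ - x₂‖ := by
    intro x₁ x₂ y'
    have h := hf.2 x₁ x₂ y' y'
    have h0 : ‖y' - y'‖ = 0 := by simp
    rw [h0] at h
    apply sq_le_imp (norm_nonneg _) (by positivity)
    nlinarith [sq_nonneg ‖grady f x₁ y' - grady f x₂ y'‖]
  rw [norm_sub_rev]
  set G1 := grady f (xstar y z) y with hG1
  set v := y + η • G1 with hv
  set yp := projY v with hyp
  set xh := xstar yp z with hxh
  set xb := xstarz z with hxb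
  set yh := ystar xh with hyh
  set e := yh - yp with he
  set r := ‖y - yp‖ with hr
  set D := diam Y with hD
  set s := ‖xh - xb‖ with hs
  set q := ‖xh - xstar y z‖ with hq
  set γ := (l + p) / (p - l) with hγdef
  have hq0 : (0:ℝ) ≤ q := by rw [hq]; positivity
  have hr0 : (0:ℝ) ≤ r := by rw [hr]; positivity
  have hD0 : (0:ℝ) ≤ D := by rw [hD]; exact diam_nonneg
  have hγ0 : (0:ℝ) ≤ γ := by rw [hγdef]; positivity
  set Φ : EuclideanSpace ℝ (Fin d1) → ℝ :=
    fun x => sSup ((fun y' => fhat f p x y' z) '' Y) with hΦdef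
  have hcont : Continuous fun w : EuclideanSpace ℝ (Fin d1) × EuclideanSpace ℝ (Fin d2)
      => f w.1 w.2 := hf.1.continuous
  have hbdd : ∀ x, BddAbove ((fun y' => fhat f p x y' z) '' Y) := by
    intro x
    apply hYcomp.bddAbove_image
    apply Continuous.continuousOn
    simp only [fhat]
    exact (hcont.comp (continuous_const.prodMk continuous_id)).add continuous_const
  have hΦ_ge : ∀ x, ∀ y' ∈ Y, fhat f p x y' z ≤ Φ x := fun x y' hy' =>
    le_csSup (hbdd x) (Set.mem_image_of_mem _ hy')
  -- strong convexity of Φ at the minimizer xb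
  have key1 : (p - l) / 2 * s ^ 2 ≤ Φ xh - Φ xb := by
    apply aux_le_of_Ioo
    intro t ht
    have hmid : Φ (xb + t • (xh - xb))
        ≤ (1 - t) * Φ xb + t * Φ xh - t * (1 - t) * ((p - l) / 2 * s ^ 2) := by
      apply csSup_le (hYne.image _)
      rintro _ ⟨y', hy', rfl⟩
      have h1 := uc hl hpl hf.1 hlip y' z xb xh (Set.mem_Icc.mpr ⟨ht.1.le, ht.2.le⟩)
      rw [← hs] at h1
      have h2 := hΦ_ge xb y' hy'
      have h3 := hΦ_ge xh y' hy'
      have h2' := mul_le_mul_of_nonneg_left h2 (by linarith [ht.2] : (0:ℝ) ≤ 1 - t)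
      have h3' := mul_le_mul_of_nonneg_left h3 ht.1.le
      linarith
    have hmin : Φ xb ≤ Φ (xb + t • (xh - xb)) := hxstarz z _
    have ht1 : (0:ℝ) < t := ht.1
    nlinarith [hmid, hmin]
  -- primal gap bound
  have hΦxh_le : Φ xh ≤ fhat f p xh yh z := by
    apply csSup_le (hYne.image _)
    rintro _ ⟨y', hy', rfl⟩
    simp only [fhat]
    have := hystar xh y' hy'
    linarith
  have hΦxb_ge : fhat f p xh yp z ≤ Φ xb :=
    le_trans (hxstar yp z xb) (hΦ_ge xb yp (hprojY_mem v))
  have key2 : Φ xh - Φ xb ≤ f xh yh - f xh yp := by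
    simp only [fhat] at hΦxh_le hΦxb_ge
    linarith
  -- one-point concavity
  have key3 : f xh yh - f xh yp ≤ ⟪grady f xh yp, e⟫ := by
    have h := hOPC xh yp (hprojY_mem v)
    have hrw : yp - ystar xh = -e := by rw [he, hyh]; abel
    rw [hrw, inner_neg_right, ← hyh] at h
    linarith
  -- Lipschitzness of xstar in y
  have hqlip : (p - l) * q ≤ l * r := by
    have h := xstar_lip hl hpl hf hlip yp y z xh (xstar y z) (hxstar yp z) (hxstar y z)
    rw [norm_sub_rev yp y, ← hr, ← hq] at h
    exact h
  have he_le : ‖e‖ ≤ D := by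
    have h := dist_le_diam_of_mem hYcomp.isBounded (hystar_mem xh) (hprojY_mem v)
    rw [dist_eq_norm] at h
    exact h
  -- gradient difference bound
  have hG2G1 : ‖grady f xh yp - G1‖ ≤ l * (q + r) := by
    have h := hf.2 xh (xstar y z) yp y
    rw [← hG1, norm_sub_rev yp y, ← hr, ← hq] at h
    apply sq_le_imp (norm_nonneg _) (by nlinarith [hq0, hr0, hl.le] : (0:ℝ) ≤ l * (q + r))
    nlinarith [sq_nonneg ‖gradx f xh yp - gradx f (xstar y z) y‖, h, mul_nonneg hq0 hr0,
      sq_nonneg l]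
  have hb1 : ⟪grady f xh yp - G1, e⟫ ≤ l * (q + r) * D := by
    have hcs := real_inner_le_norm (grady f xh yp - G1) e
    have hmm := mul_le_mul hG2G1 he_le (norm_nonneg e)
      (by nlinarith [hq0, hr0, hl.le] : (0:ℝ) ≤ l * (q + r))
    linarith
  -- projection variational inequality
  have hb2 : η * ⟪G1, e⟫ ≤ r * D := by
    have hVI := projVI hYconv projY hprojY_mem hprojY v yh (hystar_mem xh)
    rw [← hyp, ← he] at hVI
    have hsplit : v - yp = (y - yp) + η • G1 := by rw [hv]; abel
    rw [hsplit, inner_add_left, real_inner_smul_left] at hVI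
    have habs := abs_real_inner_le_norm (y - yp) e
    rw [← hr] at habs
    have hmm := mul_le_mul_of_nonneg_left he_le hr0
    have hneg := neg_abs_le ⟪y - yp, e⟫
    linarith
  -- combine
  have hsum : ⟪grady f xh yp, e⟫ = ⟪grady f xh yp - G1, e⟫ + ⟪G1, e⟫ := by
    rw [inner_sub_left]; ring
  have h0 : (p - l) / 2 * s ^ 2 ≤ ⟪grady f xh yp - G1, e⟫ + ⟪G1, e⟫ := by
    rw [← hsum]; linarith
  have hq2 : q ≤ γ * r := by
    rw [hγdef, div_mul_eq_mul_div, le_div_iff₀ hμ]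
    nlinarith [hqlip, mul_nonneg hp0.le hr0]
  have hb1' : ⟪grady f xh yp - G1, e⟫ ≤ l * (γ * r + r) * D := by
    refine le_trans hb1 ?_
    have h := mul_le_mul_of_nonneg_right
      (mul_le_mul_of_nonneg_left (by linarith : q + r ≤ γ * r + r) hl.le) hD0
    exact h
  rw [div_mul_eq_mul_div, div_mul_eq_mul_div, le_div_iff₀ (mul_pos hη hμ)]
  have h0η := mul_le_mul_of_nonneg_left h0 hη.le
  have hb1η := mul_le_mul_of_nonneg_left hb1' hη.le
  nlinarith [h0η, hb1η, hb2]
end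

section
/- Let p = 2l, 0 < η ≤ 1/(1000l), and ε > 0. For y ∈ Y and z ∈ ℝ^{d1}, set y⁺(z) := P_Y(y + η∇_y f(x*(y,z), y)). Then ‖x*(z) − x*(y⁺(z),z)‖² ≤ (6D(Y)/(lη²ε²))·‖y⁺(z) − y‖² + (2D(Y)/l)·ε². -/
open Set Metric
open scoped RealInnerProductSpace

section aux

lemma sqle {a b : ℝ} (ha : 0 ≤ a) (hb : 0 ≤ b) (h : a ^ 2 ≤ b ^ 2) : a ≤ b := by nlinarith

variable {d1 d2 : ℕ} {l : ℝ}
  {f : EuclideanSpace ℝ (Fin d1) → EuclideanSpace ℝ (Fin d2) → ℝ}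

lemma diffX (hf : IsLSmooth l f) (y : EuclideanSpace ℝ (Fin d2)) :
    Differentiable ℝ (fun x => f x y) := fun x =>
  by
    have h2 : DifferentiableAt ℝ (fun x' : EuclideanSpace ℝ (Fin d1) => (x', y)) x := by fun_prop
    have := DifferentiableAt.comp (𝕜 := ℝ) x (hf.1 (x, y)) h2
    exact this

lemma gradx_lip (hf : IsLSmooth l f) (hl : 0 ≤ l) (y : EuclideanSpace ℝ (Fin d2))
    (x₁ x₂ : EuclideanSpace ℝ (Fin d1)) :
    ‖gradx f x₁ y - gradx f x₂ y‖ ≤ l * ‖x₁ - x₂‖ := by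
  have h := hf.2 x₁ x₂ y y
  simp only [sub_self, norm_zero] at h
  refine sqle (norm_nonneg _) (by positivity) ?_
  nlinarith [sq_nonneg ‖grady f x₁ y - grady f x₂ y‖]

lemma hasDerivLine (hf : IsLSmooth l f) (y : EuclideanSpace ℝ (Fin d2))
    (a v : EuclideanSpace ℝ (Fin d1)) (t : ℝ) :
    HasDerivAt (fun s : ℝ => f (a + s • v) y) ⟪gradx f (a + t • v) y, v⟫ t := by
  have hg : HasDerivAt (fun s : ℝ => a + s • v) v t := by
    simpa using ((hasDerivAt_id t).smul_const v).const_add a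
  have hF : HasFDerivAt (fun x => f x y)
      (InnerProductSpace.toDual ℝ _ (gradx f (a + t • v) y)) (a + t • v) :=
    HasGradientAt.hasFDerivAt ((diffX hf y (a + t • v)).hasGradientAt)
  have := hF.comp_hasDerivAt t hg
  simp only [InnerProductSpace.toDual_apply_apply] at this
  exact this

end aux

section aux2
variable {d1 d2 : ℕ} {l : ℝ}
  {f : EuclideanSpace ℝ (Fin d1) → EuclideanSpace ℝ (Fin d2) → ℝ}

lemma midA (hf : IsLSmooth l f) (hl : 0 ≤ l) (y : EuclideanSpace ℝ (Fin d2))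
    (a b : EuclideanSpace ℝ (Fin d1)) :
    f ((1/2 : ℝ) • (a + b)) y ≤ (f a y + f b y) / 2 + l / 8 * ‖b - a‖ ^ 2 := by
  set v := b - a with hv
  set ψ : ℝ → ℝ := fun s => f (a + s • v) y + l / 2 * s ^ 2 * ‖v‖ ^ 2 with hψdef
  set ψ' : ℝ → ℝ := fun t => ⟪gradx f (a + t • v) y, v⟫ + l * t * ‖v‖ ^ 2 with hψ'def
  have hψ : ∀ t, HasDerivAt ψ (ψ' t) t := by
    intro t
    have h1 := hasDerivLine hf y a v t
    have h2 : HasDerivAt (fun s : ℝ => l / 2 * s ^ 2 * ‖v‖ ^ 2) (l * t * ‖v‖ ^ 2) t := by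
      have := ((hasDerivAt_pow 2 t).const_mul (l / 2)).mul_const (‖v‖ ^ 2)
      exact this.congr_deriv (by ring)
    exact h1.add h2
  have hmono : Monotone ψ' := by
    intro s t hst
    have hlip := gradx_lip hf hl y (a + t • v) (a + s • v)
    have heq : (a + t • v) - (a + s • v) = (t - s) • v := by module
    rw [heq, norm_smul] at hlip
    have hinner : ⟪gradx f (a + s • v) y, v⟫ - ⟪gradx f (a + t • v) y, v⟫
        ≤ ‖gradx f (a + t • v) y - gradx f (a + s • v) y‖ * ‖v‖ := by
      rw [← inner_sub_left]
      calc ⟪gradx f (a + s • v) y - gradx f (a + t • v) y, v⟫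
          ≤ ‖gradx f (a + s • v) y - gradx f (a + t • v) y‖ * ‖v‖ := real_inner_le_norm _ _
        _ = ‖gradx f (a + t • v) y - gradx f (a + s • v) y‖ * ‖v‖ := by rw [norm_sub_rev]
    have habs : |t - s| = t - s := abs_of_nonneg (by linarith)
    rw [Real.norm_eq_abs, habs] at hlip
    simp only [hψ'def]
    nlinarith [norm_nonneg v, mul_le_mul_of_nonneg_right hlip (norm_nonneg v)]
  have hconv : ConvexOn ℝ univ ψ := by
    refine MonotoneOn.convexOn_of_deriv convex_univ ?_ ?_ ?_
    · have hdiff : Differentiable ℝ ψ := fun x => (hψ x).differentiableAt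
      exact hdiff.continuous.continuousOn
    · exact fun x _ => ((hψ x).differentiableAt).differentiableWithinAt
    · have : deriv ψ = ψ' := funext fun x => (hψ x).deriv
      rw [this]
      exact hmono.monotoneOn _
  have hineq := hconv.2 (mem_univ (0 : ℝ)) (mem_univ (1 : ℝ))
    (by norm_num : (0:ℝ) ≤ 1/2) (by norm_num : (0:ℝ) ≤ 1/2) (by norm_num)
  simp only [smul_eq_mul, hψdef] at hineq
  norm_num at hineq
  have e1 : a + v = b := by rw [hv]; abel
  have e2 : a + (1/2 : ℝ) • v = (1/2 : ℝ) • (a + b) := by rw [hv]; module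
  rw [e1, e2] at hineq
  nlinarith [hineq]

end aux2

section aux3
variable {d1 d2 : ℕ} {l : ℝ}
  {f : EuclideanSpace ℝ (Fin d1) → EuclideanSpace ℝ (Fin d2) → ℝ}

lemma midB (hf : IsLSmooth l f) (hl : 0 ≤ l) (y : EuclideanSpace ℝ (Fin d2))
    (z x₁ x₂ : EuclideanSpace ℝ (Fin d1)) :
    fhat f (2*l) ((1/2 : ℝ) • (x₁ + x₂)) y z
      ≤ (fhat f (2*l) x₁ y z + fhat f (2*l) x₂ y z) / 2 - l/8 * ‖x₁ - x₂‖ ^ 2 := by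
  have hA := midA hf hl y x₁ x₂
  rw [norm_sub_rev] at hA
  have hpar : ‖(1/2 : ℝ) • (x₁ + x₂) - z‖ ^ 2
      = (‖x₁ - z‖ ^ 2 + ‖x₂ - z‖ ^ 2) / 2 - ‖x₁ - x₂‖ ^ 2 / 4 := by
    have h1 : (1/2 : ℝ) • (x₁ + x₂) - z = (1/2 : ℝ) • ((x₁ - z) + (x₂ - z)) := by module
    have h2 := parallelogram_law_with_norm ℝ (x₁ - z) (x₂ - z)
    have h3 : (x₁ - z) - (x₂ - z) = x₁ - x₂ := by abel
    rw [h3] at h2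
    have hhalf : ‖(1/2 : ℝ)‖ = 1/2 := by rw [Real.norm_eq_abs]; norm_num
    rw [h1, norm_smul, hhalf]
    nlinarith [h2]
  simp only [fhat]
  rw [hpar]
  ring_nf
  nlinarith [hA]

lemma growth_of_min {ψ : EuclideanSpace ℝ (Fin d1) → ℝ} {m : EuclideanSpace ℝ (Fin d1)} {c : ℝ}
    (hmid : ∀ x₁ x₂, ψ ((1/2 : ℝ) • (x₁ + x₂)) ≤ (ψ x₁ + ψ x₂) / 2 - c * ‖x₁ - x₂‖ ^ 2)
    (hmin : ∀ x, ψ m ≤ ψ x) (x : EuclideanSpace ℝ (Fin d1)) :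
    2 * c * ‖m - x‖ ^ 2 ≤ ψ x - ψ m := by
  have h1 := hmid m x
  have h2 := hmin ((1/2 : ℝ) • (m + x))
  linarith

lemma meanval (hf : IsLSmooth l f) (hl : 0 ≤ l) (y₁ y₂ : EuclideanSpace ℝ (Fin d2))
    (u v : EuclideanSpace ℝ (Fin d1)) :
    f u y₁ - f u y₂ - (f v y₁ - f v y₂) ≤ l * ‖y₁ - y₂‖ * ‖u - v‖ := by
  set w := u - v with hw
  set φ : ℝ → ℝ := fun t => f (v + t • w) y₁ - f (v + t • w) y₂ with hφdef
  set φ' : ℝ → ℝ := fun t =>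
    ⟪gradx f (v + t • w) y₁ - gradx f (v + t • w) y₂, w⟫ with hφ'def
  have hφ : ∀ t, HasDerivAt φ (φ' t) t := by
    intro t
    have h1 := hasDerivLine hf y₁ v w t
    have h2 := hasDerivLine hf y₂ v w t
    have := h1.sub h2
    simp only [hφ'def, inner_sub_left]
    exact this
  obtain ⟨c, _, hc⟩ := exists_hasDerivAt_eq_slope φ φ' one_pos
    (by
      have hdiff : Differentiable ℝ φ := fun x => (hφ x).differentiableAt
      exact hdiff.continuous.continuousOn)
    (fun x _ => hφ x)
  have e1 : v + (1 : ℝ) • w = u := by rw [hw]; module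
  have e0 : v + (0 : ℝ) • w = v := by rw [hw]; module
  have hbound : φ' c ≤ l * ‖y₁ - y₂‖ * ‖w‖ := by
    have hCS := real_inner_le_norm (gradx f (v + c • w) y₁ - gradx f (v + c • w) y₂) w
    have hsm := hf.2 (v + c • w) (v + c • w) y₁ y₂
    simp only [sub_self, norm_zero] at hsm
    have hg : ‖gradx f (v + c • w) y₁ - gradx f (v + c • w) y₂‖ ≤ l * ‖y₁ - y₂‖ := by
      refine sqle (norm_nonneg _) (by positivity) ?_
      nlinarith [sq_nonneg ‖grady f (v + c • w) y₁ - grady f (v + c • w) y₂‖]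
    calc φ' c ≤ ‖gradx f (v + c • w) y₁ - gradx f (v + c • w) y₂‖ * ‖w‖ := hCS
      _ ≤ l * ‖y₁ - y₂‖ * ‖w‖ := by
          exact mul_le_mul_of_nonneg_right hg (norm_nonneg _)
  have hφ1 : φ 1 = f u y₁ - f u y₂ := by simp only [hφdef]; rw [e1]
  have hφ0 : φ 0 = f v y₁ - f v y₂ := by simp only [hφdef]; rw [e0]
  rw [hφ1, hφ0] at hc
  simp only [sub_zero, div_one] at hc
  linarith [hc ▸ hbound]

lemma proj_inner {E : Type*} [NormedAddCommGroup E] [InnerProductSpace ℝ E]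
    {Y : Set E} (hYconv : Convex ℝ Y) {P : E → E} (hPmem : ∀ v, P v ∈ Y)
    (hP : ∀ v, ∀ w ∈ Y, ‖v - P v‖ ≤ ‖v - w‖) (v : E) {w : E} (hw : w ∈ Y) :
    ⟪v - P v, w - P v⟫ ≤ 0 := by
  set u := v - P v with hu
  set d := w - P v with hd
  set C := ‖d‖ ^ 2 with hC
  have hCnn : 0 ≤ C := by positivity
  have key : ∀ t : ℝ, 0 < t → t ≤ 1 → 2 * t * ⟪u, d⟫ ≤ t ^ 2 * C := by
    intro t ht ht1
    have hpt : P v + t • d ∈ Y := by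
      have := hYconv (hPmem v) hw (by linarith : (0:ℝ) ≤ 1 - t) ht.le (by ring)
      convert this using 1
      rw [hd]; module
    have h2 := hP v _ hpt
    have heq : v - (P v + t • d) = u - t • d := by rw [hu]; module
    rw [heq] at h2
    have hsq : ‖u‖ ^ 2 ≤ ‖u - t • d‖ ^ 2 := by
      have := mul_self_le_mul_self (norm_nonneg _) h2
      nlinarith [this]
    have hexpand := norm_sub_sq_real u (t • d)
    rw [real_inner_smul_right, norm_smul, Real.norm_eq_abs, abs_of_pos ht] at hexpand
    nlinarith [hsq, hexpand]
  by_contra hcon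
  push_neg at hcon
  set a := ⟪u, d⟫ with ha
  set t := min 1 (a / (C + 1)) with htdef
  have ht : 0 < t := lt_min one_pos (div_pos hcon (by linarith))
  have ht1 : t ≤ 1 := min_le_left _ _
  have ht2 : t ≤ a / (C + 1) := min_le_right _ _
  have ht3 : t * (C + 1) ≤ a := by
    rw [← le_div_iff₀ (by linarith : (0:ℝ) < C + 1)]; exact ht2
  have hkey := key t ht ht1
  nlinarith [mul_pos ht hcon, mul_le_mul_of_nonneg_left ht3 ht.le, sq_nonneg t]

end aux3


set_option maxHeartbeats 1000000 in
/-- with `p = 2l`, `0 < η ≤ 1/(1000l)`, `ε > 0`,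
`‖x*(z) − x*(y⁺(z),z)‖² ≤ (6D(Y)/(lη²ε²))‖y⁺(z) − y‖² + (2D(Y)/l)ε²`
where `y⁺(z) = P_Y(y + η∇_y f(x*(y,z), y))`. -/
theorem statement10 {d1 d2 : ℕ} (l η ε : ℝ) (hl : 0 < l) (hη : 0 < η)
    (hη' : η ≤ 1 / (1000 * l)) (hε : 0 < ε)
    (f : EuclideanSpace ℝ (Fin d1) → EuclideanSpace ℝ (Fin d2) → ℝ)
    (hf : IsLSmooth l f)
    (Y : Set (EuclideanSpace ℝ (Fin d2))) (hYne : Y.Nonempty) (hYconv : Convex ℝ Y)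
    (hYcomp : IsCompact Y)
    (projY : EuclideanSpace ℝ (Fin d2) → EuclideanSpace ℝ (Fin d2))
    (hprojY_mem : ∀ v, projY v ∈ Y)
    (hprojY : ∀ v, ∀ w ∈ Y, ‖v - projY v‖ ≤ ‖v - w‖)
    -- one-point-concavity of `f` in `y` on `Y`
    (ystar : EuclideanSpace ℝ (Fin d1) → EuclideanSpace ℝ (Fin d2))
    (hystar_mem : ∀ x, ystar x ∈ Y)
    (hystar : ∀ x, ∀ y ∈ Y, f x y ≤ f x (ystar x))
    (hOPC : ∀ x, ∀ y ∈ Y, ⟪grady f x y, y - ystar x⟫ ≤ f x y - f x (ystar x))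
    -- `x*(y, z)`: minimizer of `x ↦ f̂(x, y, z)` with `p = 2l`
    (xstar : EuclideanSpace ℝ (Fin d2) → EuclideanSpace ℝ (Fin d1) → EuclideanSpace ℝ (Fin d1))
    (hxstar : ∀ y z x, fhat f (2 * l) (xstar y z) y z ≤ fhat f (2 * l) x y z)
    -- `x*(z)`: minimizer of `x ↦ Φ(x,z) = max_{y∈Y} f̂(x,y,z)`
    (xstarz : EuclideanSpace ℝ (Fin d1) → EuclideanSpace ℝ (Fin d1))
    (hxstarz : ∀ z x, sSup ((fun y => fhat f (2 * l) (xstarz z) y z) '' Y)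
        ≤ sSup ((fun y => fhat f (2 * l) x y z) '' Y))
    (y : EuclideanSpace ℝ (Fin d2)) (hy : y ∈ Y) (z : EuclideanSpace ℝ (Fin d1)) :
    ‖xstarz z - xstar (projY (y + η • grady f (xstar y z) y)) z‖ ^ 2
      ≤ 6 * diam Y / (l * η ^ 2 * ε ^ 2)
          * ‖projY (y + η • grady f (xstar y z) y) - y‖ ^ 2
        + 2 * diam Y / l * ε ^ 2 := by
  have hl0 : (0:ℝ) ≤ l := hl.le
  set g := grady f (xstar y z) y with hg
  set yp := projY (y + η • g) with hyp
  have hypY : yp ∈ Y := hprojY_mem _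
  set xt := xstar y z with hxt
  set xh := xstar yp z with hxh
  set xz := xstarz z with hxz
  set D := diam Y with hD
  set Δ := ‖yp - y‖ with hΔ
  have hΔnn : 0 ≤ Δ := norm_nonneg _
  have hDnn : 0 ≤ D := diam_nonneg
  have hdiam : ∀ w₁ ∈ Y, ∀ w₂ ∈ Y, ‖w₁ - w₂‖ ≤ D := fun w₁ h1 w₂ h2 => by
    rw [← dist_eq_norm]; exact dist_le_diam_of_mem hYcomp.isBounded h1 h2
  -- the function Φ(·, z)
  set F : EuclideanSpace ℝ (Fin d1) → ℝ :=
    fun x => sSup ((fun y' => fhat f (2*l) x y' z) '' Y) with hF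
  have hcont : ∀ x, ContinuousOn (fun y' => fhat f (2*l) x y' z) Y := by
    intro x
    have h1 : Continuous (fun y' => f x y') :=
      hf.1.continuous.comp (continuous_const.prodMk continuous_id)
    exact ((h1.add continuous_const).continuousOn)
  have hbdd : ∀ x, BddAbove ((fun y' => fhat f (2*l) x y' z) '' Y) :=
    fun x => hYcomp.bddAbove_image (hcont x)
  have hne : ∀ x : EuclideanSpace ℝ (Fin d1),
      ((fun y' => fhat f (2*l) x y' z) '' Y).Nonempty := fun x => hYne.image _
  have hlePhi : ∀ x, ∀ y' ∈ Y, fhat f (2*l) x y' z ≤ F x :=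
    fun x y' hy' => le_csSup (hbdd x) (mem_image_of_mem _ hy')
  have hPhile : ∀ x, F x ≤ fhat f (2*l) x (ystar x) z := by
    intro x
    refine csSup_le (hne x) ?_
    rintro _ ⟨y', hy', rfl⟩
    simp only [fhat]
    linarith [hystar x y' hy']
  have hFmid : ∀ x₁ x₂, F ((1/2 : ℝ) • (x₁ + x₂)) ≤ (F x₁ + F x₂)/2 - l/8 * ‖x₁ - x₂‖^2 := by
    intro x₁ x₂
    refine csSup_le (hne _) ?_
    rintro _ ⟨y', hy', rfl⟩
    calc fhat f (2*l) ((1/2 : ℝ) • (x₁ + x₂)) y' z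
        ≤ (fhat f (2*l) x₁ y' z + fhat f (2*l) x₂ y' z)/2 - l/8 * ‖x₁ - x₂‖^2 :=
          midB hf hl0 y' z x₁ x₂
      _ ≤ (F x₁ + F x₂)/2 - l/8 * ‖x₁ - x₂‖^2 := by
          linarith [hlePhi x₁ y' hy', hlePhi x₂ y' hy']
  have hFmin : ∀ x, F xz ≤ F x := hxstarz z
  have hgrowthF := growth_of_min hFmid hFmin xh
  -- quadratic growth for fhat minimizers
  have hgrowthf : ∀ y' x, l/4 * ‖xstar y' z - x‖^2
      ≤ fhat f (2*l) x y' z - fhat f (2*l) (xstar y' z) y' z := by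
    intro y' x
    have := growth_of_min (ψ := fun x => fhat f (2*l) x y' z) (m := xstar y' z) (c := l/8)
      (fun x₁ x₂ => midB hf hl0 y' z x₁ x₂) (hxstar y' z) x
    linarith
  -- Lipschitz property of xstar
  have hLip : ‖xh - xt‖ ≤ 2 * Δ := by
    have g1 := hgrowthf y xh
    have g2 := hgrowthf yp xt
    rw [← hxt, norm_sub_rev xt xh] at g1
    rw [← hxh] at g2
    have mv := meanval hf hl0 y yp xh xt
    have hyyp : ‖y - yp‖ = Δ := by rw [hΔ, norm_sub_rev]
    rw [hyyp] at mv
    simp only [fhat] at g1 g2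
    have hllin : l * ‖xh - xt‖^2 ≤ l * (2 * Δ * ‖xh - xt‖) := by nlinarith [g1, g2, mv]
    have hT2 := (mul_le_mul_iff_right₀ hl).mp hllin
    nlinarith [hT2, norm_nonneg (xh - xt), hΔnn]
  -- main chain
  set w := ystar xh with hw
  have hwY : w ∈ Y := hystar_mem xh
  have step1 : l/4 * ‖xz - xh‖^2 ≤ F xh - F xz := by
    calc l/4 * ‖xz - xh‖^2 = 2 * (l/8) * ‖xz - xh‖^2 := by ring
      _ ≤ F xh - F xz := hgrowthF
  have step2 : fhat f (2*l) xh yp z ≤ F xz := by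
    calc fhat f (2*l) xh yp z ≤ fhat f (2*l) xz yp z := hxstar yp z xz
      _ ≤ F xz := hlePhi xz yp hypY
  have step3 : F xh ≤ fhat f (2*l) xh w z := hPhile xh
  have e1 : fhat f (2*l) xh w z = f xh w + l * ‖xh - z‖^2 := by simp only [fhat]; ring
  have e2 : fhat f (2*l) xh yp z = f xh yp + l * ‖xh - z‖^2 := by simp only [fhat]; ring
  have key1 : l/4 * ‖xz - xh‖^2 ≤ f xh w - f xh yp := by linarith
  have key2 : f xh w - f xh yp ≤ ⟪grady f xh yp, w - yp⟫ := by
    have hopc := hOPC xh yp hypY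
    rw [← hw] at hopc
    have hneg : ⟪grady f xh yp, yp - w⟫ = -⟪grady f xh yp, w - yp⟫ := by
      rw [show yp - w = -(w - yp) by abel, inner_neg_right]
    linarith [hneg ▸ hopc]
  -- gradient error bound
  have herr : ‖grady f xh yp - g‖ ≤ 3 * l * Δ := by
    have hsm := hf.2 xh xt yp y
    rw [← hg, ← hΔ] at hsm
    refine sqle (norm_nonneg _) (by positivity) ?_
    have h1 : ‖xh - xt‖^2 ≤ 4 * Δ^2 := by nlinarith [hLip, norm_nonneg (xh - xt)]
    have h2 : l^2 * ‖xh - xt‖^2 ≤ l^2 * (4 * Δ^2) :=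
      mul_le_mul_of_nonneg_left h1 (sq_nonneg l)
    nlinarith [hsm, h2, sq_nonneg ‖gradx f xh yp - gradx f xt y‖,
      mul_nonneg (sq_nonneg l) (sq_nonneg Δ)]
  have hwyp : ‖w - yp‖ ≤ D := hdiam w hwY yp hypY
  have key3 : ⟪grady f xh yp - g, w - yp⟫ ≤ 3 * l * Δ * D := by
    calc ⟪grady f xh yp - g, w - yp⟫ ≤ ‖grady f xh yp - g‖ * ‖w - yp‖ :=
          real_inner_le_norm _ _
      _ ≤ (3 * l * Δ) * D := by
          apply mul_le_mul herr hwyp (norm_nonneg _) (by positivity)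
  -- projection inequality
  have hproj := proj_inner hYconv hprojY_mem hprojY (y + η • g) hwY
  rw [← hyp] at hproj
  have hexp : ⟪(y + η • g) - yp, w - yp⟫ = ⟪y - yp, w - yp⟫ + η * ⟪g, w - yp⟫ := by
    rw [show (y + η • g) - yp = (y - yp) + η • g by abel, inner_add_left,
      real_inner_smul_left]
  have hupper : ⟪yp - y, w - yp⟫ ≤ Δ * D := by
    calc ⟪yp - y, w - yp⟫ ≤ ‖yp - y‖ * ‖w - yp‖ := real_inner_le_norm _ _
      _ ≤ Δ * D := by rw [← hΔ]; exact mul_le_mul_of_nonneg_left hwyp hΔnn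
  have hflip : ⟪y - yp, w - yp⟫ = -⟪yp - y, w - yp⟫ := by
    rw [show y - yp = -(yp - y) by abel, inner_neg_left]
  have key4 : η * ⟪g, w - yp⟫ ≤ Δ * D := by
    rw [hexp] at hproj
    linarith [hflip ▸ hproj]
  have key5 : ⟪g, w - yp⟫ ≤ Δ * D / η := by
    rw [le_div_iff₀ hη]
    linarith [key4]
  have key6 : ⟪grady f xh yp, w - yp⟫ ≤ Δ * D / η + 3 * l * Δ * D := by
    have hsplit : ⟪grady f xh yp, w - yp⟫
        = ⟪g, w - yp⟫ + ⟪grady f xh yp - g, w - yp⟫ := by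
      rw [← inner_add_left, show g + (grady f xh yp - g) = grady f xh yp by abel]
    rw [hsplit]
    linarith [key3, key5]
  have main : l/4 * ‖xz - xh‖^2 ≤ Δ * D / η + 3 * l * Δ * D := by
    linarith [key1, key2, key6]
  -- final arithmetic
  have hlη : l * η ≤ 1/1000 := by
    have h1000 : (0:ℝ) < 1000 * l := by positivity
    have h2 := (le_div_iff₀ h1000).mp hη'
    nlinarith [h2]
  have harith : Δ * D / η + 3 * l * Δ * D
      ≤ l/4 * (6 * D / (l * η^2 * ε^2) * Δ^2 + 2 * D / l * ε^2) := by
    rw [← sub_nonneg]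
    have hexpand : l/4 * (6 * D / (l * η^2 * ε^2) * Δ^2 + 2 * D / l * ε^2)
        - (Δ * D / η + 3 * l * Δ * D)
        = D * (3 * Δ^2 + η^2 * ε^4 - 2 * Δ * η * ε^2 - 6 * l * Δ * η^2 * ε^2)
          / (2 * η^2 * ε^2) := by
      field_simp
      ring
    rw [hexpand]
    apply div_nonneg _ (by positivity)
    apply mul_nonneg hDnn
    have h6 : 6 * l * η * (Δ * η * ε^2) ≤ 6/1000 * (Δ * η * ε^2) := by
      apply mul_le_mul_of_nonneg_right _ (by positivity)
      linarith
    nlinarith [sq_nonneg ((1003/1000) * Δ - η * ε^2), sq_nonneg Δ, h6]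
  have hfinal := main.trans harith
  have hlpos : (0:ℝ) < l/4 := by linarith
  exact (mul_le_mul_iff_right₀ hlpos).mp hfinal
end
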